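/- A function u : ℝ → ℝ that is both convex and semiconcave with constant C (i.e., u(x+h) - 2u(x) + u(x-h) ≤ C h² for all x, h) is differentiable everywhere, and its derivative is Lipschitz with constant C; in particular u ∈ C^{1,1}(ℝ). -/

import Mathlib

open Set

private lemma slope_eq_aux (u : ℝ → ℝ) (x t : ℝ) (ht : t ≠ 0) :
    slope u x (x + t) = (u (x + t) - u x) / t := by
  rw [slope_def_field, show x + t - x = t by ring]

theorem convex_semiconcave_is_C11
    (u : ℝ → ℝ) (C : ℝ) (hC : 0 ≤ C)
    (hconv : ConvexOn ℝ univ u)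
    (hsc : ∀ x h : ℝ, u (x + h) - 2 * u x + u (x - h) ≤ C * h ^ 2) :
    Differentiable ℝ u ∧ ∀ x y : ℝ, |deriv u x - deriv u y| ≤ C * |x - y| := by
  -- slope monotonicity from convexity
  have mono : ∀ x a b : ℝ, a ≠ x → b ≠ x → a ≤ b → slope u x a ≤ slope u x b := by
    intro x a b ha hb hab
    exact hconv.slope_mono (mem_univ x) ⟨mem_univ a, ha⟩ ⟨mem_univ b, hb⟩ hab
  -- key inequality from semiconcavity
  have key : ∀ x t : ℝ, 0 < t → slope u x (x + t) ≤ slope u x (x - t) + C * t := by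
    intro x t ht
    have h1 := hsc x t
    have e1 := slope_eq_aux u x t ht.ne'
    have e2 := slope_eq_aux u x (-t) (neg_ne_zero.mpr ht.ne')
    rw [show x + -t = x - t by ring] at e2
    rw [e1, e2, div_le_iff₀ ht]
    have e3 : ((u (x - t) - u x) / -t + C * t) * t = (u x - u (x - t)) + C * t ^ 2 := by
      field_simp [ht.ne']; ring
    rw [e3]
    linarith
  -- existence of a sandwich slope limit at every point
  have dEx : ∀ x : ℝ, ∃ d : ℝ, ∀ y : ℝ, y ≠ x → |slope u x y - d| ≤ C * |y - x| := by
    intro x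
    have hne : (slope u x '' Ioi x).Nonempty := ⟨_, ⟨x + 1, by simp, rfl⟩⟩
    have hbd : BddBelow (slope u x '' Ioi x) := by
      refine ⟨slope u x (x - 1), ?_⟩
      rintro s ⟨y, hy, rfl⟩
      exact mono x (x - 1) y (by norm_num) (ne_of_gt (mem_Ioi.mp hy))
        (by linarith [mem_Ioi.mp hy])
    set d := sInf (slope u x '' Ioi x) with hd
    have ha : ∀ y, x < y → d ≤ slope u x y := fun y hy => csInf_le hbd ⟨y, hy, rfl⟩
    have hb : ∀ y, y < x → slope u x y ≤ d := by
      intro y hy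
      refine le_csInf hne ?_
      rintro s ⟨z, hz, rfl⟩
      exact mono x y z (ne_of_lt hy) (ne_of_gt (mem_Ioi.mp hz))
        (le_of_lt (lt_trans hy (mem_Ioi.mp hz)))
    refine ⟨d, ?_⟩
    intro y hy
    rw [abs_le]
    rcases lt_or_gt_of_ne hy with h | h
    · -- y < x
      have ht : (0 : ℝ) < x - y := by linarith
      have k := key x (x - y) ht
      rw [show x - (x - y) = y by ring] at k
      have h1 : slope u x y ≤ d := hb y h
      have h2 : d ≤ slope u x (x + (x - y)) := ha _ (by linarith)
      have habs : |y - x| = x - y := by rw [abs_of_neg (by linarith : y - x < 0)]; ring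
      constructor <;> [skip; skip] <;> rw [habs] <;> nlinarith
    · -- x < y
      have ht : (0 : ℝ) < y - x := by linarith
      have k := key x (y - x) ht
      rw [show x + (y - x) = y by ring] at k
      have h1 : d ≤ slope u x y := ha y h
      have h2 : slope u x (x - (y - x)) ≤ d := hb _ (by linarith)
      have habs : |y - x| = y - x := abs_of_pos ht
      constructor <;> rw [habs] <;> nlinarith
  choose d hd using dEx
  have hder : ∀ x : ℝ, HasDerivAt u (d x) x := by
    intro x
    rw [hasDerivAt_iff_tendsto_slope]
    have h0 : Filter.Tendsto (fun y : ℝ => C * |y - x|) (nhdsWithin x {x}ᶜ) (nhds 0) := by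
      have hc : Filter.Tendsto (fun y : ℝ => C * |y - x|) (nhds x) (nhds (C * |x - x|)) := by
        apply Filter.Tendsto.const_mul
        exact (continuous_abs.comp (continuous_id.sub continuous_const)).tendsto x
      simpa using hc.mono_left nhdsWithin_le_nhds
    have h1 : Filter.Tendsto (fun y : ℝ => slope u x y - d x) (nhdsWithin x {x}ᶜ) (nhds 0) := by
      refine squeeze_zero_norm' ?_ h0
      filter_upwards [self_mem_nhdsWithin] with y hy
      rw [Real.norm_eq_abs]
      exact hd x y hy
    have h2 := h1.add_const (d x)
    simpa using h2
  have hdiff : Differentiable ℝ u := fun x => (hder x).differentiableAt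
  have hderiv : ∀ x : ℝ, deriv u x = d x := fun x => (hder x).deriv
  refine ⟨hdiff, ?_⟩
  -- monotonicity of the derivative
  have hmono : ∀ x y : ℝ, x < y → deriv u x ≤ deriv u y := by
    intro x y hxy
    calc deriv u x ≤ slope u x y :=
          hconv.deriv_le_slope (mem_univ x) (mem_univ y) hxy (hdiff x)
      _ ≤ deriv u y := hconv.slope_le_deriv (mem_univ x) (mem_univ y) hxy (hdiff y)
  -- telescoping estimate
  have tel : ∀ (a h : ℝ), 0 < h → ∀ n : ℕ,
      u (a + n * h + h) - u (a + n * h) ≤ (u (a + h) - u a) + C * n * h ^ 2 := by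
    intro a h hh n
    induction n with
    | zero => simp
    | succ k ih =>
      have h2 := hsc (a + k * h + h) h
      rw [show a + ↑k * h + h - h = a + ↑k * h by ring] at h2
      push_cast
      rw [show a + ((k : ℝ) + 1) * h + h = a + ↑k * h + h + h by ring,
        show a + ((k : ℝ) + 1) * h = a + ↑k * h + h by ring]
      nlinarith
  -- one-sided Lipschitz bound
  have hlip : ∀ x y : ℝ, x < y → deriv u y ≤ deriv u x + C * (y - x) := by
    intro x y hxy
    refine le_of_forall_pos_le_add ?_
    intro ε hε
    obtain ⟨n, hn⟩ : ∃ n : ℕ, C * (y - x) / ε < n := exists_nat_gt _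
    set m : ℕ := n + 1 with hm
    have hm0 : (0 : ℝ) < m := by exact_mod_cast Nat.succ_pos n
    set h : ℝ := (y - x) / m with hhdef
    have hh : 0 < h := by rw [hhdef]; exact div_pos (by linarith) hm0
    have hxmh : x + m * h = y := by rw [hhdef, mul_comm, div_mul_cancel₀ _ hm0.ne']; ring
    have htel := tel x h hh m
    rw [hxmh] at htel
    -- deriv u y ≤ slope u y (y+h)
    have s1 : deriv u y ≤ (u (y + h) - u y) / h := by
      rw [← slope_eq_aux u y h hh.ne']
      exact hconv.deriv_le_slope (mem_univ y) (mem_univ (y + h)) (by linarith) (hdiff y)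
    -- slope u x (x+h) ≤ deriv u x + C * h
    have s2 : (u (x + h) - u x) / h ≤ deriv u x + C * h := by
      rw [← slope_eq_aux u x h hh.ne']
      have k := key x h hh
      have s3 : slope u x (x - h) ≤ deriv u x := by
        rw [slope_comm]
        exact hconv.slope_le_deriv (mem_univ (x - h)) (mem_univ x) (by linarith) (hdiff x)
      linarith
    have s4 : (u (y + h) - u y) / h ≤ (u (x + h) - u x) / h + C * (y - x) := by
      rw [div_add' _ _ _ hh.ne', div_le_div_iff₀ hh hh]
      have : C * ↑m * h ^ 2 = C * (y - x) * h := by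
        rw [hhdef]; field_simp
      nlinarith
    have s5 : C * h < ε := by
      have hcm : C * h = C * (y - x) / m := by rw [hhdef]; ring
      rw [hcm, div_lt_iff₀ hm0]
      have hnm : (n : ℝ) < m := by exact_mod_cast Nat.lt_succ_self n
      rw [div_lt_iff₀ hε] at hn
      nlinarith
    linarith
  intro x y
  rcases lt_trichotomy x y with h | h | h
  · have h1 := hmono x y h
    have h2 := hlip x y h
    rw [abs_of_neg (show x - y < 0 by linarith), abs_le]
    constructor <;> linarith
  · simp [h]
  · have h1 := hmono y x h
    have h2 := hlip y x h
    rw [abs_of_pos (show (0:ℝ) < x - y by linarith), abs_le]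
    constructor <;> linarith
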